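/- Let ρ ∈ (0,1). Then (1/(1−e^{ρ−1})) · (1−e^{−ρ})^{(ρ−1)/ρ} ≤ (1/(1−ρ)) · ρ^{(ρ−1)/ρ} · e^{1/(2ρ)}. -/

import Mathlib

/-- For `ρ ∈ (0,1)`,
`(1/(1−e^{ρ−1})) (1−e^{−ρ})^{(ρ−1)/ρ} ≤ (1/(1−ρ)) ρ^{(ρ−1)/ρ} e^{1/(2ρ)}`. -/
theorem analytic_ineq_rho (ρ : ℝ) (hρ : ρ ∈ Set.Ioo (0 : ℝ) 1) :
    (1 / (1 - Real.exp (ρ - 1))) * (1 - Real.exp (-ρ)) ^ ((ρ - 1) / ρ) ≤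
      (1 / (1 - ρ)) * ρ ^ ((ρ - 1) / ρ) * Real.exp (1 / (2 * ρ)) := by
  obtain ⟨h0, h1⟩ := hρ
  set a : ℝ := (ρ - 1) / ρ with ha_def
  have ha : a ≤ 0 := div_nonpos_of_nonpos_of_nonneg (by linarith) h0.le
  have he1 : Real.exp (ρ - 1) < 1 := by
    rw [Real.exp_lt_one_iff]; linarith
  have hd1 : 0 < 1 - Real.exp (ρ - 1) := by linarith
  have hexp1 : Real.exp (1 - ρ) * Real.exp (ρ - 1) = 1 := by
    rw [← Real.exp_add]; norm_num
  have hexp2 : Real.exp ρ * Real.exp (-ρ) = 1 := by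
    rw [← Real.exp_add]; norm_num
  -- Step 1 : 1/(1-e^{ρ-1}) ≤ e^{1-ρ}/(1-ρ)
  have hs1 : (1 - ρ) * Real.exp (ρ - 1) ≤ 1 - Real.exp (ρ - 1) := by
    nlinarith [Real.add_one_le_exp (1 - ρ), Real.exp_pos (ρ - 1)]
  have hstep1 : 1 / (1 - Real.exp (ρ - 1)) ≤ Real.exp (1 - ρ) / (1 - ρ) := by
    rw [div_le_div_iff₀ hd1 (by linarith)]
    nlinarith [Real.exp_pos (ρ - 1), Real.exp_pos (1 - ρ)]
  -- Step 2 : ρ e^{-ρ} ≤ 1 - e^{-ρ}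
  have hs2 : ρ * Real.exp (-ρ) ≤ 1 - Real.exp (-ρ) := by
    nlinarith [Real.add_one_le_exp ρ, Real.exp_pos (-ρ)]
  have hpos2 : 0 < ρ * Real.exp (-ρ) := mul_pos h0 (Real.exp_pos _)
  -- Step 3 : (1-e^{-ρ})^a ≤ (ρ e^{-ρ})^a = ρ^a e^{1-ρ}... compute
  have hstep3 : (1 - Real.exp (-ρ)) ^ a ≤ ρ ^ a * Real.exp (1 - ρ) := by
    have h3 : (1 - Real.exp (-ρ)) ^ a ≤ (ρ * Real.exp (-ρ)) ^ a :=
      Real.rpow_le_rpow_of_nonpos hpos2 hs2 ha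
    have h4 : (ρ * Real.exp (-ρ)) ^ a = ρ ^ a * Real.exp (1 - ρ) := by
      rw [Real.mul_rpow h0.le (Real.exp_pos _).le, ← Real.exp_mul]
      congr 1
      field_simp [ha_def]
      rw [show ρ * a = ρ - 1 by rw [ha_def]; field_simp]
      ring
    rw [h4] at h3; exact h3
  -- combine
  have hρa : (0:ℝ) < ρ ^ a := Real.rpow_pos_of_pos h0 a
  have hb1 : (0:ℝ) ≤ (1 - Real.exp (-ρ)) ^ a := by
    apply Real.rpow_nonneg
    nlinarith [Real.exp_pos (-ρ)]
  have hmain : (1 / (1 - Real.exp (ρ - 1))) * (1 - Real.exp (-ρ)) ^ a ≤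
      (Real.exp (1 - ρ) / (1 - ρ)) * (ρ ^ a * Real.exp (1 - ρ)) := by
    apply mul_le_mul hstep1 hstep3 hb1
    exact div_nonneg (Real.exp_pos _).le (by linarith)
  refine hmain.trans ?_
  have hexpeq : Real.exp (1 - ρ) * Real.exp (1 - ρ) = Real.exp (2 * (1 - ρ)) := by
    rw [← Real.exp_add]; ring_nf
  have hexple : Real.exp (2 * (1 - ρ)) ≤ Real.exp (1 / (2 * ρ)) := by
    apply Real.exp_le_exp.mpr
    rw [le_div_iff₀ (by linarith : (0:ℝ) < 2 * ρ)]
    nlinarith [sq_nonneg (2 * ρ - 1)]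
  calc (Real.exp (1 - ρ) / (1 - ρ)) * (ρ ^ a * Real.exp (1 - ρ))
      = (1 / (1 - ρ)) * ρ ^ a * Real.exp (2 * (1 - ρ)) := by
        rw [← hexpeq]; ring
    _ ≤ (1 / (1 - ρ)) * ρ ^ a * Real.exp (1 / (2 * ρ)) := by
        apply mul_le_mul_of_nonneg_left hexple
        exact mul_nonneg (div_nonneg zero_le_one (by linarith)) hρa.le
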